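/- Theorem 4.2: Suppose the enlargement *G has a hypernode not in its principal galaxy, i.e., there exists a sequence v : ℕ → V such that for every vertex w ∈ V and every k ∈ ℕ, {n : d(v(n), w) ≤ k} ∉ ℱ. Then for every vertex x₀ ∈ V there exists a two-way infinite family w : ℤ → (ℕ → V) of sequences such that: (a) for each i ∈ ℤ, the sequence w(i) is not limitedly distant from any constant sequence (so each w(i) lies in a galaxy different from the principal galaxy); (b) for all i < j in ℤ and every m ∈ ℕ, {n : d(w(i)(n), x₀) + m ≤ d(w(j)(n), x₀)} ∈ ℱ (the galaxy of w(i) is closer to the principal galaxy than is the galaxy of w(j)); and (c) for i ≠ j, w(i) and w(j) are not limitedly distant, so the family yields a two-way infinite sequence of distinct galaxies totally ordered according to their closeness to the principal galaxy. -/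
import Mathlib

lemma walk_getVert_dist_aux {V : Type*} {G : SimpleGraph V} (hG : G.Connected) :
    ∀ {u v : V} (p : G.Walk u v) (t : ℕ), G.dist u (p.getVert t) ≤ t ∧
      (t ≤ p.length → G.dist (p.getVert t) v + t ≤ p.length) := by
  intro u v p
  induction p with
  | nil =>
    intro t
    constructor
    · simp [SimpleGraph.Walk.getVert, SimpleGraph.dist_self]
    · intro _; simp_all [SimpleGraph.Walk.getVert, SimpleGraph.dist_self]
  | @cons u x v h q ih =>
    intro t
    cases t with
    | zero =>
      refine ⟨by simp, fun _ => ?_⟩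
      simpa using SimpleGraph.dist_le (SimpleGraph.Walk.cons h q)
    | succ s =>
      rw [SimpleGraph.Walk.getVert_cons_succ]
      have hux : G.dist u x = 1 := SimpleGraph.dist_eq_one_iff_adj.mpr h
      have h1 := (ih s).1
      constructor
      · calc G.dist u (q.getVert s) ≤ G.dist u x + G.dist x (q.getVert s) :=
              hG.dist_triangle
          _ ≤ s + 1 := by omega
      · intro hts
        have hsl : s ≤ q.length := by
          simp only [SimpleGraph.Walk.length_cons] at hts; omega
        have h2 := (ih s).2 hsl
        simp only [SimpleGraph.Walk.length_cons]
        omega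

lemma div_gap_aux {pi qi pj qj D m : ℕ} (hqi : 0 < qi) (hqj : 0 < qj)
    (hcross : pi * qj + 1 ≤ pj * qi) (hD : (m + 1) * (qi * qj) ≤ D) :
    D * pi / qi + m + 1 ≤ D * pj / qj := by
  rw [Nat.le_div_iff_mul_le hqj]
  refine Nat.le_of_mul_le_mul_right ?_ hqi
  have h1 : D * pi / qi * qi ≤ D * pi := Nat.div_mul_le_self _ _
  calc (D * pi / qi + m + 1) * qj * qi
      = (D * pi / qi * qi) * qj + (m + 1) * (qi * qj) := by ring
    _ ≤ D * pi * qj + D := add_le_add (Nat.mul_le_mul_right _ h1) hD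
    _ = D * (pi * qj + 1) := by ring
    _ ≤ D * (pj * qi) := Nat.mul_le_mul_left _ hcross
    _ = D * pj * qi := by ring

/-- numerator of the `i`-th scaling fraction -/
def galP (i : ℤ) : ℕ := if 0 ≤ i then 2 * i.natAbs + 1 else 1

/-- denominator of the `i`-th scaling fraction -/
def galQ (i : ℤ) : ℕ := 2 * i.natAbs + 2

lemma galP_pos (i : ℤ) : 0 < galP i := by unfold galP; split <;> omega

lemma galQ_pos (i : ℤ) : 0 < galQ i := by unfold galQ; omega

lemma galP_le_galQ (i : ℤ) : galP i ≤ galQ i := by unfold galP galQ; split <;> omega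

lemma gal_cross {i j : ℤ} (hij : i < j) : galP i * galQ j + 1 ≤ galP j * galQ i := by
  unfold galP galQ
  rcases le_or_gt 0 i with hi | hi
  · have hj : 0 ≤ j := le_trans hi hij.le
    simp only [if_pos hi, if_pos hj]
    have ha : i.natAbs < j.natAbs := by omega
    set a := i.natAbs; set b := j.natAbs
    nlinarith
  · rcases le_or_gt 0 j with hj | hj
    · simp only [if_neg (not_le.mpr hi), if_pos hj]
      have ha : 1 ≤ i.natAbs := by omega
      set a := i.natAbs; set b := j.natAbs
      nlinarith
    · simp only [if_neg (not_le.mpr hi), if_neg (not_le.mpr hj)]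
      have ha : j.natAbs < i.natAbs := by omega
      set a := i.natAbs; set b := j.natAbs
      nlinarith

/-- Theorem 4.2: if the enlargement `*G` has a hypernode not in its principal
galaxy, then there is a two-way infinite sequence of distinct galaxies totally
ordered according to their closeness to the principal galaxy. -/
theorem two_way_infinite_sequence_of_galaxies {V : Type*} [Infinite V]
    (G : SimpleGraph V) (hG : G.Connected)
    (ℱ : Ultrafilter ℕ) (hF : ∀ a : ℕ, ℱ ≠ pure a)
    (hv : ∃ v : ℕ → V, ∀ w : V, ∀ k : ℕ, {n : ℕ | G.dist (v n) w ≤ k} ∉ ℱ) :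
    ∀ x₀ : V, ∃ w : ℤ → (ℕ → V),
      (∀ i : ℤ, ∀ c : V, ∀ k : ℕ, {n : ℕ | G.dist (w i n) c ≤ k} ∉ ℱ) ∧
      (∀ i j : ℤ, i < j → ∀ m : ℕ,
        {n : ℕ | G.dist (w i n) x₀ + m ≤ G.dist (w j n) x₀} ∈ ℱ) ∧
      (∀ i j : ℤ, i ≠ j →
        ¬ ∃ k : ℕ, {n : ℕ | G.dist (w i n) (w j n) ≤ k} ∈ ℱ) := by
  intro x₀
  obtain ⟨v, hvv⟩ := hv
  set D : ℕ → ℕ := fun n => G.dist x₀ (v n) with hDdef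
  have hD : ∀ K : ℕ, {n : ℕ | D n ≤ K} ∉ ℱ := by
    intro K hK
    refine hvv x₀ K ?_
    convert hK using 2
    ext n
    simp [hDdef, SimpleGraph.dist_comm]
  have hDmem : ∀ K : ℕ, {n : ℕ | K ≤ D n} ∈ ℱ := by
    intro K
    have h1 : {n : ℕ | D n ≤ K}ᶜ ∈ ℱ := Ultrafilter.compl_mem_iff_notMem.mpr (hD K)
    refine Filter.mem_of_superset h1 ?_
    intro n hn
    simp only [Set.mem_compl_iff, Set.mem_setOf_eq, not_le] at hn ⊢
    omega
  -- geodesics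
  have hPex : ∀ n, ∃ p : G.Walk x₀ (v n), p.length = G.dist x₀ (v n) :=
    fun n => hG.exists_walk_length_eq_dist x₀ (v n)
  choose P hP using hPex
  set t : ℤ → ℕ → ℕ := fun i n => D n * galP i / galQ i with htdef
  set w : ℤ → ℕ → V := fun i n => (P n).getVert (t i n) with hwdef
  have ht_le : ∀ i n, t i n ≤ D n := by
    intro i n
    calc D n * galP i / galQ i ≤ D n * galQ i / galQ i :=
          Nat.div_le_div_right (Nat.mul_le_mul_left _ (galP_le_galQ i))
      _ = D n := Nat.mul_div_cancel _ (galQ_pos i)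
  have hdist : ∀ i n, G.dist x₀ (w i n) = t i n := by
    intro i n
    have h1 := (walk_getVert_dist_aux hG (P n) (t i n)).1
    have h2 := (walk_getVert_dist_aux hG (P n) (t i n)).2 (by rw [hP]; exact ht_le i n)
    rw [hP] at h2
    have h3 : G.dist x₀ (v n) ≤ G.dist x₀ ((P n).getVert (t i n)) +
        G.dist ((P n).getVert (t i n)) (v n) := hG.dist_triangle
    have h4 := ht_le i n
    have h5 : D n = G.dist x₀ (v n) := rfl
    show G.dist x₀ ((P n).getVert (t i n)) = t i n
    omega
  -- (a) : each w i is far from every constant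
  have parta : ∀ i : ℤ, ∀ c : V, ∀ k : ℕ, {n : ℕ | G.dist (w i n) c ≤ k} ∉ ℱ := by
    intro i c k hk
    refine hD ((k + G.dist x₀ c + 1) * galQ i - 1) (Filter.mem_of_superset hk ?_)
    intro n hn
    simp only [Set.mem_setOf_eq] at hn ⊢
    have h1 : G.dist x₀ (w i n) ≤ G.dist x₀ c + G.dist c (w i n) := hG.dist_triangle
    rw [SimpleGraph.dist_comm (u := c) (v := w i n)] at h1
    rw [hdist i n] at h1
    have h2 : t i n ≤ k + G.dist x₀ c := by omega
    have h5 : t i n = D n * galP i / galQ i := rfl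
    rw [h5] at h2
    have h3 : D n * galP i < (k + G.dist x₀ c + 1) * galQ i := by
      rw [← Nat.div_lt_iff_lt_mul (galQ_pos i)]
      omega
    have h4 : D n ≤ D n * galP i := Nat.le_mul_of_pos_right _ (galP_pos i)
    omega
  -- (b)
  have partb : ∀ i j : ℤ, i < j → ∀ m : ℕ,
      {n : ℕ | G.dist (w i n) x₀ + m ≤ G.dist (w j n) x₀} ∈ ℱ := by
    intro i j hij m
    refine Filter.mem_of_superset (hDmem ((m + 1) * (galQ i * galQ j))) ?_
    intro n hn
    simp only [Set.mem_setOf_eq] at hn ⊢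
    rw [SimpleGraph.dist_comm (u := w i n) (v := x₀), SimpleGraph.dist_comm (u := w j n) (v := x₀),
      hdist i n, hdist j n]
    have hgap := div_gap_aux (galQ_pos i) (galQ_pos j) (gal_cross hij) hn
    have h5 : t i n = D n * galP i / galQ i := rfl
    have h6 : t j n = D n * galP j / galQ j := rfl
    omega
  -- (c)
  have key : ∀ i j : ℤ, i < j → ∀ k : ℕ, {n : ℕ | G.dist (w i n) (w j n) ≤ k} ∉ ℱ := by
    intro i j hij k hk
    have hb := partb i j hij (k + 1)
    obtain ⟨n, hn1, hn2⟩ := Filter.nonempty_of_mem (Filter.inter_mem hk hb)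
    simp only [Set.mem_setOf_eq] at hn1 hn2
    have h1 : G.dist (w j n) x₀ ≤ G.dist (w j n) (w i n) + G.dist (w i n) x₀ :=
      hG.dist_triangle
    rw [SimpleGraph.dist_comm (u := w j n) (v := w i n)] at h1
    omega
  refine ⟨w, parta, partb, ?_⟩
  rintro i j hne ⟨k, hk⟩
  rcases hne.lt_or_gt with h | h
  · exact key i j h k hk
  · refine key j i h k ?_
    convert hk using 2
    ext n
    simp [SimpleGraph.dist_comm]
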